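/- Let L(t) = e^{-kt} with k > 0, and define γ₀(t) = 1/L(t) = e^{kt} and γ_ℓ(t) = ∑_{i=1}^{ℓ} (-1/(2i+1)!)·L(t)^{2i}·(d^{2i}γ_{ℓ-i}/dt^{2i})(t) for ℓ ≥ 1. Then γ_ℓ(t) = c_ℓ k^{2ℓ} e^{(1-2ℓ)kt}, where c₀ = 1 and c_ℓ = -∑_{i=1}^{ℓ} ((2ℓ-2i-1)^{2i}/(2i+1)!)·c_{ℓ-i} for ℓ ≥ 1. -/

import Mathlib

lemma iteratedDeriv_const_mul_exp (a b : ℝ) (n : ℕ) (t : ℝ) :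
    iteratedDeriv n (fun s => a * Real.exp (b * s)) t = a * b ^ n * Real.exp (b * t) := by
  induction n generalizing a t with
  | zero => simp
  | succ n ih =>
    rw [iteratedDeriv_succ']
    have hd : deriv (fun s => a * Real.exp (b * s)) = fun s => (a * b) * Real.exp (b * s) := by
      funext s
      rw [deriv_const_mul _ (by fun_prop)]
      have : deriv (fun s => Real.exp (b * s)) s = Real.exp (b * s) * b := by
        rw [show (fun s => Real.exp (b * s)) = Real.exp ∘ (fun s => b * s) from rfl,
          deriv_comp _ (Real.differentiable_exp _) (by fun_prop)]
        rw [deriv_const_mul _ (differentiable_id.differentiableAt)]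
        simp [mul_comm]
      rw [this]; ring
    rw [hd, ih]
    ring

theorem moore_gamma_exponential (k : ℝ) (hk : 0 < k)
    (γ : ℕ → ℝ → ℝ) (c : ℕ → ℝ)
    (hγ0 : ∀ t : ℝ, γ 0 t = Real.exp (k * t))
    (hγ : ∀ ℓ : ℕ, 1 ≤ ℓ → ∀ t : ℝ,
      γ ℓ t = ∑ i ∈ Finset.Icc 1 ℓ,
        (-1 / (Nat.factorial (2 * i + 1)) : ℝ) * (Real.exp (-k * t)) ^ (2 * i) *
          iteratedDeriv (2 * i) (γ (ℓ - i)) t)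
    (hc0 : c 0 = 1)
    (hcrec : ∀ ℓ : ℕ, 1 ≤ ℓ →
      c ℓ = -∑ i ∈ Finset.Icc 1 ℓ,
        ((2 * (ℓ : ℝ) - 2 * (i : ℝ) - 1) ^ (2 * i) / (Nat.factorial (2 * i + 1)) : ℝ) * c (ℓ - i)) :
    ∀ ℓ : ℕ, ∀ t : ℝ, γ ℓ t = c ℓ * k ^ (2 * ℓ) * Real.exp ((1 - 2 * (ℓ : ℝ)) * k * t) := by
  intro ℓ
  induction ℓ using Nat.strong_induction_on with
  | _ ℓ IH =>
    intro t
    rcases Nat.eq_zero_or_pos ℓ with h0 | h1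
    · subst h0
      simp [hγ0, hc0, one_mul]
    · rw [hγ ℓ h1 t, hcrec ℓ h1, ← Finset.sum_neg_distrib,
        Finset.sum_mul, Finset.sum_mul]
      refine Finset.sum_congr rfl ?_
      intro i hi
      obtain ⟨hi1, hi2⟩ := Finset.mem_Icc.mp hi
      set m := ℓ - i with hmdef
      have hm : (m : ℝ) = (ℓ : ℝ) - (i : ℝ) := by
        rw [hmdef]; push_cast [Nat.cast_sub hi2]; ring
      have hγm : γ m = fun s => c m * k ^ (2 * m) * Real.exp ((1 - 2 * (m : ℝ)) * k * s) := by
        funext s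
        exact IH m (by omega) s
      have hiter : iteratedDeriv (2 * i) (γ m) t =
          (c m * k ^ (2 * m)) * ((1 - 2 * (m : ℝ)) * k) ^ (2 * i) *
            Real.exp ((1 - 2 * (m : ℝ)) * k * t) := by
        rw [hγm]
        have := iteratedDeriv_const_mul_exp (c m * k ^ (2 * m)) ((1 - 2 * (m : ℝ)) * k) (2 * i) t
        simpa [mul_assoc] using this
      rw [hiter]
      have e1 : (Real.exp (-k * t)) ^ (2 * i) * Real.exp ((1 - 2 * (m : ℝ)) * k * t) =
          Real.exp ((1 - 2 * (ℓ : ℝ)) * k * t) := by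
        rw [← Real.exp_nat_mul, ← Real.exp_add]
        congr 1
        rw [hm]; push_cast; ring
      have e2 : (k : ℝ) ^ (2 * m) * k ^ (2 * i) = k ^ (2 * ℓ) := by
        rw [← pow_add]; congr 1; omega
      have e3 : ((1 - 2 * (m : ℝ)) * k) ^ (2 * i) =
          (2 * (ℓ : ℝ) - 2 * (i : ℝ) - 1) ^ (2 * i) * k ^ (2 * i) := by
        rw [mul_pow]
        congr 1
        rw [show (1 - 2 * (m : ℝ)) = -(2 * (ℓ : ℝ) - 2 * (i : ℝ) - 1) by rw [hm]; ring,
          Even.neg_pow ⟨i, by ring⟩]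
      calc (-1 / (Nat.factorial (2 * i + 1)) : ℝ) * (Real.exp (-k * t)) ^ (2 * i) *
            ((c m * k ^ (2 * m)) * ((1 - 2 * (m : ℝ)) * k) ^ (2 * i) *
              Real.exp ((1 - 2 * (m : ℝ)) * k * t))
          = (-1 / (Nat.factorial (2 * i + 1)) : ℝ) * c m *
              ((1 - 2 * (m : ℝ)) * k) ^ (2 * i) * k ^ (2 * m) *
              ((Real.exp (-k * t)) ^ (2 * i) * Real.exp ((1 - 2 * (m : ℝ)) * k * t)) := by
            ring
        _ = (-1 / (Nat.factorial (2 * i + 1)) : ℝ) * c m *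
              ((2 * (ℓ : ℝ) - 2 * (i : ℝ) - 1) ^ (2 * i) * k ^ (2 * i)) * k ^ (2 * m) *
              Real.exp ((1 - 2 * (ℓ : ℝ)) * k * t) := by rw [e1, e3]
        _ = -((2 * (ℓ : ℝ) - 2 * (i : ℝ) - 1) ^ (2 * i) / (Nat.factorial (2 * i + 1)) * c m) *
              k ^ (2 * ℓ) * Real.exp ((1 - 2 * (ℓ : ℝ)) * k * t) := by
            rw [← e2]; ring
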